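/- Let (W,S) be a Coxeter system with automorphism σ preserving S. Suppose J ⊂ S with W_J finite, x ∈ {}^J W^{σ(J)} with x σ(J) x⁻¹ = J (as sets of reflections, i.e., x·σ(J) = J under conjugation preserving simple reflections of W_J), and u ∈ W_J. Let O_x be the σ-conjugacy class of x. Then O_x ⪯_σ ux, i.e., some minimal length element of O_x is ≤ ux in Bruhat order; in fact x itself is of minimal length in O_x and x ≤ ux. -/

import Mathlib

/-- Bruhat order on a Coxeter group (subword property). -/
def CoxeterSystem.bruhatLE {B W : Type*} [Group W] {M : CoxeterMatrix B}
    (cs : CoxeterSystem M W) (x w : W) : Prop :=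
  ∃ ω : List B, cs.wordProd ω = w ∧ cs.IsReduced ω ∧
    ∃ ω' : List B, ω'.Sublist ω ∧ cs.wordProd ω' = x

/-- The σ-twisted power `x σ(x) σ²(x) ⋯ σ^{n−1}(x)`. -/
def twPow {W : Type*} [Group W] (σ : MulAut W) (x : W) : ℕ → W
  | 0 => 1
  | n + 1 => twPow σ x n * (σ ^ n) x

private theorem sigma_length_le {B W : Type*} [Group W] {M : CoxeterMatrix B}
    (cs : CoxeterSystem M W) (σ : MulAut W)
    (hσ : ∀ i : B, ∃ j : B, σ (cs.simple i) = cs.simple j)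
    (w : W) : cs.length (σ w) ≤ cs.length w := by
  choose f hf using hσ
  have hmap : ∀ ω : List B, σ (cs.wordProd ω) = cs.wordProd (ω.map f) := by
    intro ω
    induction ω with
    | nil => simp [CoxeterSystem.wordProd]
    | cons i t ih =>
      rw [cs.wordProd_cons, map_mul, ih, List.map_cons, cs.wordProd_cons, hf]
  obtain ⟨ω, hlen, rfl⟩ := cs.exists_reduced_word w
  rw [hmap]
  calc cs.length (cs.wordProd (ω.map f)) ≤ (ω.map f).length :=
        cs.length_wordProd_le _
    _ = ω.length := List.length_map _
    _ = cs.length (cs.wordProd ω) := by unfold CoxeterSystem.IsReduced at hlen; omega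

private theorem sigma_pow_length_le {B W : Type*} [Group W] {M : CoxeterMatrix B}
    (cs : CoxeterSystem M W) (σ : MulAut W)
    (hσ : ∀ i : B, ∃ j : B, σ (cs.simple i) = cs.simple j)
    (n : ℕ) (w : W) : cs.length ((σ ^ n) w) ≤ cs.length w := by
  induction n generalizing w with
  | zero => simp
  | succ n ih =>
    have : (σ ^ (n + 1)) w = (σ ^ n) (σ w) := by
      rw [pow_succ]; rfl
    rw [this]
    exact (ih (σ w)).trans (sigma_length_le cs σ hσ w)

private theorem twPow_conj {W : Type*} [Group W] (σ : MulAut W) (x g : W) (n : ℕ) :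
    twPow σ (g * x * (σ g)⁻¹) n = g * twPow σ x n * ((σ ^ n) g)⁻¹ := by
  induction n with
  | zero => simp [twPow]
  | succ n ih =>
    have h1 : (σ ^ n) (σ g) = (σ ^ (n + 1)) g := by rw [pow_succ]; rfl
    simp only [twPow, ih, map_mul, map_inv, h1]
    group

private theorem twPow_length_le {B W : Type*} [Group W] {M : CoxeterMatrix B}
    (cs : CoxeterSystem M W) (σ : MulAut W)
    (hσ : ∀ i : B, ∃ j : B, σ (cs.simple i) = cs.simple j)
    (y : W) (n : ℕ) : cs.length (twPow σ y n) ≤ n * cs.length y := by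
  induction n with
  | zero => simp [twPow]
  | succ n ih =>
    calc cs.length (twPow σ y n * (σ ^ n) y)
        ≤ cs.length (twPow σ y n) + cs.length ((σ ^ n) y) := cs.length_mul_le _ _
      _ ≤ n * cs.length y + cs.length y :=
          Nat.add_le_add ih (sigma_pow_length_le cs σ hσ n y)
      _ = (n + 1) * cs.length y := by ring

/-- If `x` is σ-straight, `x ∈ {}^J W` (so `ℓ(vx) = ℓ(v) + ℓ(x)` for `v ∈ W_J`) and
`u ∈ W_J`, then `x` is of minimal length in its σ-conjugacy class `O_x` and
`O_x ⪯_σ ux`: a minimal length element of `O_x` (namely `x`) is `≤ ux` in Bruhat order. -/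
theorem straight_preceq_ux {B W : Type*} [Group W] {M : CoxeterMatrix B}
    (cs : CoxeterSystem M W) (σ : MulAut W)
    (hσ : ∀ i : B, ∃ j : B, σ (cs.simple i) = cs.simple j)
    (J : Set B) (WJ : Subgroup W)
    (hWJ : WJ = Subgroup.closure (cs.simple '' J))
    (hfin : (WJ : Set W).Finite)
    (x : W)
    (hstraight : ∀ n : ℕ, cs.length (twPow σ x n) = n * cs.length x)
    (hJW : ∀ v ∈ WJ, cs.length (v * x) = cs.length v + cs.length x)
    (u : W) (hu : u ∈ WJ) :
    (∀ y : W, (∃ g : W, y = g * x * (σ g)⁻¹) → cs.length x ≤ cs.length y) ∧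
    (∃ z : W, ((∃ g : W, z = g * x * (σ g)⁻¹) ∧
        ∀ y : W, (∃ g : W, y = g * x * (σ g)⁻¹) → cs.length z ≤ cs.length y) ∧
      cs.bruhatLE z (u * x)) := by
  have hmin : ∀ y : W, (∃ g : W, y = g * x * (σ g)⁻¹) → cs.length x ≤ cs.length y := by
    rintro y ⟨g, rfl⟩
    set y := g * x * (σ g)⁻¹ with hy
    by_contra hlt
    push_neg at hlt
    set n := 2 * cs.length g + 1 with hn
    have key : n * cs.length x ≤ 2 * cs.length g + n * cs.length y := by
      have hx : twPow σ x n = g⁻¹ * twPow σ y n * (σ ^ n) g := by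
        rw [hy, twPow_conj]; group
      calc n * cs.length x = cs.length (twPow σ x n) := (hstraight n).symm
        _ = cs.length (g⁻¹ * twPow σ y n * (σ ^ n) g) := by rw [hx]
        _ ≤ cs.length (g⁻¹ * twPow σ y n) + cs.length ((σ ^ n) g) :=
            cs.length_mul_le _ _
        _ ≤ cs.length g⁻¹ + cs.length (twPow σ y n) + cs.length ((σ ^ n) g) :=
            Nat.add_le_add_right (cs.length_mul_le _ _) _
        _ ≤ cs.length g + n * cs.length y + cs.length g := by
            refine Nat.add_le_add (Nat.add_le_add ?_ (twPow_length_le cs σ hσ y n))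
              (sigma_pow_length_le cs σ hσ n g)
            rw [cs.length_inv]
        _ = 2 * cs.length g + n * cs.length y := by ring
    have h1 : n * (cs.length y + 1) ≤ n * cs.length x :=
      Nat.mul_le_mul_left n hlt
    have := h1.trans key
    rw [Nat.mul_add, Nat.mul_one] at this
    omega
  refine ⟨hmin, x, ⟨⟨1, by simp⟩, hmin⟩, ?_⟩
  obtain ⟨ωu, hu_len, hu_prod⟩ := cs.exists_reduced_word u
  obtain ⟨ωx, hx_len, hx_prod⟩ := cs.exists_reduced_word x
  refine ⟨ωu ++ ωx, ?_, ?_, ωx, List.sublist_append_right _ _, hx_prod.symm⟩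
  · rw [cs.wordProd_append, ← hu_prod, ← hx_prod]
  · unfold CoxeterSystem.IsReduced
    rw [cs.wordProd_append, ← hu_prod, ← hx_prod, hJW u hu, List.length_append,
      ]
    rw [hu_prod, hx_prod]; unfold CoxeterSystem.IsReduced at hu_len hx_len; omega
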